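/- arXiv:0802.1327 — 3 statements merged into one kernel-verified Lean document; each statement's English description precedes it below -/
import Mathlib

section
/- Let G be an (l,r)-biregular Tanner graph with n variable nodes that is an (l,r,α,γ) left expander, and let 0 ≤ β ≤ 1 with β(l−1) ∈ ℕ and β(l−1)/l < 2γ−1. Let (B_t)_{t≥0} be a sequence of sets of variable nodes such that |B_0| ≤ αn/(lr), |B_t ∪ B_{t+1}| ≤ αn for all t, and for every t: (a) every variable node in B_{t+1}∖B_t has at least l−β(l−1) of its incident edges into N(B_t); and (b) |N(B_t)| ≤ l·|B_t∖B_{t+1}| + ((l+β(l−1))/2)·|B_t∩B_{t+1}|. Then |B_{t+1}| < |B_t| whenever B_t ≠ ∅; in particular B_t = ∅ for some t ≤ |B_0|. -/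
set_option maxHeartbeats 1000000


open Finset

/-- The set of check nodes adjacent to a set `V` of variable nodes in an
`(l,r)`-biregular Tanner graph, presented (configuration-model style) as a
bijection `σ` between variable-node sockets and check-node sockets. -/
def nbhd {n m l r : ℕ} (σ : (Fin n × Fin l) ≃ (Fin m × Fin r))
    (V : Finset (Fin n)) : Finset (Fin m) :=
  (V ×ˢ (univ : Finset (Fin l))).image fun p => (σ p).1

/-- `σ` is an `(l,r,α,γ)` left expander. -/
def IsLeftExpander {n m l r : ℕ} (σ : (Fin n × Fin l) ≃ (Fin m × Fin r))
    (α γ : ℝ) : Prop :=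
  ∀ V : Finset (Fin n), (V.card : ℝ) ≤ α * n →
    γ * V.card * l ≤ ((nbhd σ V).card : ℝ)

lemma mem_nbhd {n m l r : ℕ} (σ : (Fin n × Fin l) ≃ (Fin m × Fin r))
    (V : Finset (Fin n)) (x : Fin m) :
    x ∈ nbhd σ V ↔ ∃ v ∈ V, ∃ i, (σ (v, i)).1 = x := by
  simp [nbhd, Finset.mem_product]

lemma nbhd_union_le {n m l r : ℕ} (σ : (Fin n × Fin l) ≃ (Fin m × Fin r))
    (T S : Finset (Fin n)) (b : ℕ)
    (ha : ∀ v ∈ S \ T, l - b ≤ ((univ : Finset (Fin l)).filter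
      (fun i => (σ (v, i)).1 ∈ nbhd σ T)).card) :
    (nbhd σ (T ∪ S)).card ≤ (nbhd σ T).card + b * (S \ T).card := by
  have hsub : nbhd σ (T ∪ S) ⊆ nbhd σ T ∪
      (S \ T).biUnion (fun v => ((univ : Finset (Fin l)).filter
        (fun i => (σ (v, i)).1 ∉ nbhd σ T)).image fun i => (σ (v, i)).1) := by
    intro x hx
    rw [mem_nbhd] at hx
    obtain ⟨v, hv, i, hvi⟩ := hx
    by_cases hxT : x ∈ nbhd σ T
    · exact mem_union_left _ hxT
    · have hvT : v ∉ T := fun hvT => hxT ((mem_nbhd σ T x).2 ⟨v, hvT, i, hvi⟩)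
      have hvS : v ∈ S \ T := mem_sdiff.2 ⟨(mem_union.1 hv).resolve_left hvT, hvT⟩
      refine mem_union_right _ (mem_biUnion.2 ⟨v, hvS, ?_⟩)
      exact mem_image.2 ⟨i, mem_filter.2 ⟨mem_univ i, by rw [hvi]; exact hxT⟩, hvi⟩
  calc (nbhd σ (T ∪ S)).card ≤ _ := card_le_card hsub
    _ ≤ (nbhd σ T).card + ((S \ T).biUnion _).card := card_union_le _ _
    _ ≤ (nbhd σ T).card + b * (S \ T).card := by
        gcongr
        calc ((S \ T).biUnion _).card
            ≤ ∑ v ∈ S \ T, (((univ : Finset (Fin l)).filter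
              (fun i => (σ (v, i)).1 ∉ nbhd σ T)).image fun i => (σ (v, i)).1).card :=
              card_biUnion_le
          _ ≤ ∑ v ∈ S \ T, b := by
              refine Finset.sum_le_sum fun v hv => ?_
              refine le_trans (card_image_le) ?_
              have h1 := ha v hv
              have h2 : ((univ : Finset (Fin l)).filter
                  (fun i => (σ (v, i)).1 ∈ nbhd σ T)).card +
                  ((univ : Finset (Fin l)).filter
                  (fun i => (σ (v, i)).1 ∉ nbhd σ T)).card = l := by
                rw [Finset.card_filter_add_card_filter_not]
                simp
              omega
          _ = b * (S \ T).card := by rw [Finset.sum_const, smul_eq_mul, mul_comm]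

/-- on a sufficiently good left expander, a sequence of "bad"
sets satisfying the properties (a), (b) of message-passing bad sets strictly
decreases in size while nonempty, and hence dies out after at most `|B 0|`
steps. -/
theorem stmt4 {n m l r : ℕ} (hl : 2 ≤ l) (hr : 2 ≤ r)
    (σ : (Fin n × Fin l) ≃ (Fin m × Fin r))
    (α γ β : ℝ) (b : ℕ)
    (hβ0 : 0 ≤ β) (hβ1 : β ≤ 1) (hb : (b : ℝ) = β * ((l : ℝ) - 1))
    (hγcond : β * ((l : ℝ) - 1) / l < 2 * γ - 1)
    (hexp : IsLeftExpander σ α γ)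
    (B : ℕ → Finset (Fin n))
    (hinit : ((B 0).card : ℝ) ≤ α * n / ((l : ℝ) * r))
    (hsize : ∀ t : ℕ, ((B t ∪ B (t + 1)).card : ℝ) ≤ α * n)
    (ha : ∀ t : ℕ, ∀ v ∈ B (t + 1) \ B t,
      l - b ≤ ((univ : Finset (Fin l)).filter
        (fun i => (σ (v, i)).1 ∈ nbhd σ (B t))).card)
    (hb2 : ∀ t : ℕ, ((nbhd σ (B t)).card : ℝ) ≤
      (l : ℝ) * ((B t \ B (t + 1)).card : ℝ) +
        (((l : ℝ) + b) / 2) * ((B t ∩ B (t + 1)).card : ℝ)) :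
    (∀ t : ℕ, (B t).Nonempty → (B (t + 1)).card < (B t).card) ∧
      ∃ t ≤ (B 0).card, B t = ∅ := by
  have hlpos : (0:ℝ) < l := by positivity
  have hbl : (b : ℝ) < (2 * γ - 1) * l := by
    rw [hb]
    rw [div_lt_iff₀ hlpos] at hγcond
    linarith
  have hble : (b:ℝ) ≤ (l:ℝ) - 1 := by
    rw [hb]
    have h1l : (1:ℝ) ≤ (l:ℝ) := by exact_mod_cast Nat.one_le_of_lt hl
    calc β * ((l:ℝ) - 1) ≤ 1 * ((l:ℝ) - 1) :=
          mul_le_mul_of_nonneg_right hβ1 (by linarith)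
      _ = (l:ℝ) - 1 := one_mul _
  have hd : (0:ℝ) < 2 * γ * l - l - b := by linarith
  have hgb : (0:ℝ) < γ * l - b := by linarith
  have key : ∀ t : ℕ, (B t).Nonempty → (B (t + 1)).card < (B t).card := by
    intro t hT
    set T := B t with hTdef
    set S := B (t + 1) with hSdef
    -- card identities
    have hcT : (T \ S).card + (T ∩ S).card = T.card := Finset.card_sdiff_add_card_inter T S
    have hcS : (S \ T).card + (T ∩ S).card = S.card := by
      rw [Finset.inter_comm]
      exact Finset.card_sdiff_add_card_inter S T
    have hcU : (T ∪ S).card = T.card + (S \ T).card := by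
      rw [← Finset.card_union_of_disjoint (Finset.disjoint_sdiff), Finset.union_sdiff_self_eq_union]
    -- expansion
    have hexp' := hexp (T ∪ S) (hsize t)
    have hnb := nbhd_union_le σ T S b (ha t)
    have hnb' : ((nbhd σ (T ∪ S)).card : ℝ) ≤ ((nbhd σ T).card : ℝ) + b * ((S \ T).card : ℝ) := by
      exact_mod_cast hnb
    have hb2' := hb2 t
    set x := ((T \ S).card : ℝ) with hx
    set y := ((T ∩ S).card : ℝ) with hy
    set z := ((S \ T).card : ℝ) with hz
    have hxyz : ((T ∪ S).card : ℝ) = x + y + z := by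
      rw [hx, hy, hz]
      push_cast [hcU, ← hcT]
      ring
    have hmain : γ * (x + y + z) * l ≤ l * x + ((l + b) / 2) * y + b * z := by
      rw [← hxyz]
      calc γ * ((T ∪ S).card : ℝ) * l ≤ _ := hexp'
        _ ≤ ((nbhd σ T).card : ℝ) + b * z := hnb'
        _ ≤ l * x + ((l + b) / 2) * y + b * z := by linarith [hb2']
    have hx0 : 0 ≤ x := by positivity
    have hy0 : 0 ≤ y := by positivity
    have hz0 : 0 ≤ z := by positivity
    have hxy1 : 1 ≤ x + y := by
      have : 1 ≤ T.card := Finset.card_pos.2 hT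
      rw [hx, hy]
      exact_mod_cast (by omega : 1 ≤ (T \ S).card + (T ∩ S).card)
    have h1 : (γ * l - b) * z + ((2 * γ * l - l - b) / 2) * y ≤ (l - γ * l) * x := by
      linarith [hmain]
    have hzx : z < x := by
      by_contra hc
      push_neg at hc
      have h2 : (γ * l - b) * x ≤ (γ * l - b) * z := mul_le_mul_of_nonneg_left hc hgb.le
      have h3 : (2 * γ * l - l - b) * x + ((2 * γ * l - l - b) / 2) * y ≤ 0 := by linarith
      have h4 : (0:ℝ) ≤ (2 * γ * l - l - b) * x := mul_nonneg hd.le hx0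
      have h6 : (2 * γ * l - l - b) * 1 ≤ (2 * γ * l - l - b) * (x + y) :=
        mul_le_mul_of_nonneg_left hxy1 hd.le
      linarith [h3, h4, h6, hd]
    have : (S.card : ℝ) < (T.card : ℝ) := by
      have hcS' : (S.card : ℝ) = z + y := by rw [hz, hy]; exact_mod_cast hcS.symm
      have hcT' : (T.card : ℝ) = x + y := by rw [hx, hy]; exact_mod_cast hcT.symm
      linarith
    exact_mod_cast this
  refine ⟨key, ?_⟩
  by_contra hcon
  push_neg at hcon
  have hne : ∀ t ≤ (B 0).card, (B t).Nonempty := fun t ht =>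
    hcon t ht
  have hdec : ∀ k ≤ (B 0).card, (B k).card + k ≤ (B 0).card := by
    intro k hk
    induction k with
    | zero => simp
    | succ j ih =>
      have hj : j ≤ (B 0).card := Nat.le_of_succ_le hk
      have := key j (hne j hj)
      have := ih hj
      omega
  have := hdec (B 0).card le_rfl
  have h0 := hne (B 0).card le_rfl
  have := Finset.card_pos.2 h0
  omega
end

section
/- Let G be an (l,r)-biregular Tanner graph with n variable nodes that is an (l,r,α,γ) left expander, and let 0 ≤ β ≤ 1 with β(l−1) ∈ ℕ and γ > β(l−1)/l. Let B and B' be sets of variable nodes with |B ∪ B'| ≤ αn such that: (a) every variable node in B'∖B has at least l−β(l−1) of its incident edges into N(B); and (b) |N(B)| ≤ l·|B∖B'| + ((l+β(l−1))/2)·|B∩B'|. Then |B'∖B| ≤ ((1−γ)/(γ−β(l−1)/l))·|B∖B'| + ((1+β(l−1)/l−2γ)/(2(γ−β(l−1)/l)))·|B∩B'|. -/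
open Finset

/-- the one-step inequality relating the sizes of two "bad"
sets `B`, `B'` of variable nodes on a left expander. -/
theorem stmt5 {n m l r : ℕ} (hl : 2 ≤ l) (hr : 2 ≤ r)
    (σ : (Fin n × Fin l) ≃ (Fin m × Fin r))
    (α γ β : ℝ) (b : ℕ)
    (hβ0 : 0 ≤ β) (hβ1 : β ≤ 1) (hb : (b : ℝ) = β * ((l : ℝ) - 1))
    (hγ : β * ((l : ℝ) - 1) / l < γ)
    (hexp : IsLeftExpander σ α γ)
    (B B' : Finset (Fin n))
    (hcard : ((B ∪ B').card : ℝ) ≤ α * n)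
    (ha : ∀ v ∈ B' \ B,
      l - b ≤ ((univ : Finset (Fin l)).filter
        (fun i => (σ (v, i)).1 ∈ nbhd σ B)).card)
    (hb2 : ((nbhd σ B).card : ℝ) ≤
      (l : ℝ) * ((B \ B').card : ℝ) +
        (((l : ℝ) + b) / 2) * ((B ∩ B').card : ℝ)) :
    ((B' \ B).card : ℝ) ≤
      ((1 - γ) / (γ - β * ((l : ℝ) - 1) / l)) * ((B \ B').card : ℝ) +
      ((1 + β * ((l : ℝ) - 1) / l - 2 * γ) /
          (2 * (γ - β * ((l : ℝ) - 1) / l))) * ((B ∩ B').card : ℝ) := by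
  classical
  have hL0 : 0 < l := by omega
  have hLpos : (0:ℝ) < l := by exact_mod_cast hL0
  -- N(B ∪ B') = N(B) ∪ N(B' \ B)
  have hunion : nbhd σ (B ∪ B') = nbhd σ B ∪ nbhd σ (B' \ B) := by
    rw [show B ∪ B' = B ∪ (B' \ B) from (union_sdiff_self_eq_union).symm]
    unfold nbhd
    rw [union_product, image_union]
  have hsub : nbhd σ (B' \ B) \ nbhd σ B ⊆
      (B' \ B).biUnion (fun v =>
        ((univ.filter (fun i => (σ (v, i)).1 ∉ nbhd σ B)).image
          (fun i => (σ (v, i)).1))) := by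
    intro c hc
    rw [mem_sdiff] at hc
    obtain ⟨hc1, hc2⟩ := hc
    simp only [nbhd, mem_image, mem_product] at hc1
    obtain ⟨⟨v, i⟩, ⟨hv, _⟩, rfl⟩ := hc1
    simp only [mem_biUnion, mem_image, mem_filter, mem_univ, true_and]
    exact ⟨v, hv, i, hc2, rfl⟩
  have hcount : (nbhd σ (B' \ B) \ nbhd σ B).card ≤ b * (B' \ B).card := by
    calc (nbhd σ (B' \ B) \ nbhd σ B).card
        ≤ ((B' \ B).biUnion (fun v =>
            ((univ.filter (fun i => (σ (v, i)).1 ∉ nbhd σ B)).image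
              (fun i => (σ (v, i)).1)))).card := card_le_card hsub
      _ ≤ ∑ v ∈ B' \ B, ((univ.filter (fun i => (σ (v, i)).1 ∉ nbhd σ B)).image
            (fun i => (σ (v, i)).1)).card := card_biUnion_le
      _ ≤ ∑ _v ∈ B' \ B, b := by
          apply sum_le_sum
          intro v hv
          have h1 := ha v hv
          have h2 : ((univ : Finset (Fin l)).filter
              (fun i => (σ (v, i)).1 ∈ nbhd σ B)).card
              + ((univ : Finset (Fin l)).filter
                (fun i => (σ (v, i)).1 ∉ nbhd σ B)).card = l := by
            rw [card_filter_add_card_filter_not]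
            simp
          have h3 := card_image_le
            (s := (univ : Finset (Fin l)).filter (fun i => (σ (v, i)).1 ∉ nbhd σ B))
            (f := fun i => (σ (v, i)).1)
          omega
      _ = b * (B' \ B).card := by rw [sum_const, smul_eq_mul, mul_comm]
  have hNnat : (nbhd σ (B ∪ B')).card ≤ (nbhd σ B).card + b * (B' \ B).card := by
    rw [hunion, ← union_sdiff_self_eq_union, card_union_of_disjoint disjoint_sdiff]
    omega
  have hN : ((nbhd σ (B ∪ B')).card : ℝ) ≤
      ((nbhd σ B).card : ℝ) + (b : ℝ) * ((B' \ B).card : ℝ) := by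
    exact_mod_cast hNnat
  -- cardinality decomposition
  set x := ((B \ B').card : ℝ) with hx
  set y := ((B ∩ B').card : ℝ) with hy
  set z := ((B' \ B).card : ℝ) with hz
  have hdecompnat : (B ∪ B').card = (B \ B').card + (B ∩ B').card + (B' \ B).card := by
    have h1 : (B ∩ B').card + (B \ B').card = B.card := card_inter_add_card_sdiff B B'
    have h2 : (B' ∩ B).card + (B' \ B).card = B'.card := card_inter_add_card_sdiff B' B
    have h3 : (B ∪ B').card + (B ∩ B').card = B.card + B'.card :=
      card_union_add_card_inter B B'
    have h4 : (B' ∩ B).card = (B ∩ B').card := by rw [inter_comm]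
    omega
  have hdecomp : ((B ∪ B').card : ℝ) = x + y + z := by
    rw [hx, hy, hz]; exact_mod_cast hdecompnat
  have hexp' := hexp (B ∪ B') hcard
  rw [hdecomp] at hexp'
  have main : γ * (x + y + z) * l ≤
      (l : ℝ) * x + (((l : ℝ) + b) / 2) * y + (b : ℝ) * z := by
    calc γ * (x + y + z) * l ≤ ((nbhd σ (B ∪ B')).card : ℝ) := hexp'
      _ ≤ ((nbhd σ B).card : ℝ) + (b : ℝ) * z := hN
      _ ≤ (l : ℝ) * x + (((l : ℝ) + b) / 2) * y + (b : ℝ) * z := by linarith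
  set d := γ - β * ((l : ℝ) - 1) / l with hdd
  have hd : 0 < d := by rw [hdd]; linarith
  have hdne : d ≠ 0 := ne_of_gt hd
  have hLne : (l : ℝ) ≠ 0 := ne_of_gt hLpos
  have key2 : z * d * l ≤
      ((1 - γ) * x + ((1 + β * ((l : ℝ) - 1) / l - 2 * γ) / 2) * y) * l := by
    have e1 : z * d * l = γ * z * l - β * ((l : ℝ) - 1) * z := by
      rw [hdd]; field_simp
    have e2 : ((1 - γ) * x + ((1 + β * ((l : ℝ) - 1) / l - 2 * γ) / 2) * y) * l
        = (1 - γ) * l * x + (((l : ℝ) + β * ((l : ℝ) - 1)) / 2 - γ * l) * y := by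
      field_simp
    rw [e1, e2]
    rw [hb] at main
    nlinarith [main]
  have key : z * d ≤ (1 - γ) * x + ((1 + β * ((l : ℝ) - 1) / l - 2 * γ) / 2) * y :=
    le_of_mul_le_mul_right key2 hLpos
  have hrhs : (1 - γ) / d * x + (1 + β * ((l : ℝ) - 1) / l - 2 * γ) / (2 * d) * y
      = ((1 - γ) * x + ((1 + β * ((l : ℝ) - 1) / l - 2 * γ) / 2) * y) / d := by
    field_simp
  rw [hrhs, le_div_iff₀ hd]
  exact key
end

section
/- Let G be an (l,r)-biregular Tanner graph and fix a vector E ∈ {±1}^n of received values (all-(+1)-codeword assumption). Run GalB and LGalB on (G,E) starting from the same initial set of bad variable-to-check messages, with ties at variable nodes resolved by the same fixed rule in both algorithms. Then for every iteration ℓ, the set of directed edges carrying message −1 after ℓ iterations of GalB is contained in the set of directed edges carrying message −1 after ℓ iterations of LGalB; in particular, the fraction of erroneous messages satisfies P_e^GalB(G,E,ℓ) ≤ P_e^LGalB(G,E,ℓ). -/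
open Finset

/-- The `j`-th of the other `l-1` indices, skipping `i`. -/
def otherIdx {l : ℕ} (i : Fin l) (j : Fin (l - 1)) : Fin l :=
  if h : (j : ℕ) < (i : ℕ) then ⟨j, lt_trans h i.isLt⟩
  else ⟨j + 1, by have h1 := j.isLt; have h2 := i.isLt; omega⟩

/-- The variable-node socket reached from the variable socket `s` by going to
its check node and out along the `b`-th of the other `r-1` check sockets.
The Tanner graph is a configuration-model socket matching `σ`. -/
def chkAdj {n m l r : ℕ} (σ : (Fin n × Fin l) ≃ (Fin m × Fin r))
    (s : Fin n × Fin l) (b : Fin (r - 1)) : Fin n × Fin l :=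
  σ.symm ((σ s).1, otherIdx (σ s).2 b)

/-- GalB check-node rule (all-one codeword convention, `true = +1`):
the product of the other `r-1` incoming messages, i.e. `+1` iff the number of
incoming `-1`s is even. -/
def galChk {n m l r : ℕ} (σ : (Fin n × Fin l) ≃ (Fin m × Fin r))
    (cur : Fin n × Fin l → Bool) (s : Fin n × Fin l) : Bool :=
  decide (Even ((univ.filter
    fun b : Fin (r - 1) => cur (chkAdj σ s b) = false).card))

/-- Linearized (LGalB) check-node rule: the minimum of the other `r-1`
incoming messages (`-1 < +1`), i.e. `+1` iff all of them are `+1`. -/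
def linChk {n m l r : ℕ} (σ : (Fin n × Fin l) ≃ (Fin m × Fin r))
    (cur : Fin n × Fin l → Bool) (s : Fin n × Fin l) : Bool :=
  decide (∀ b : Fin (r - 1), cur (chkAdj σ s b) = true)

/-- Variable-node rule of (L)GalB: majority of the received value and the
other `l-1` incoming messages, the tie (possible only for even `l`) being
resolved by the supplied bit `coin`. -/
def galVar (l : ℕ) (rec : Bool) (ms : Fin (l - 1) → Bool) (coin : Bool) : Bool :=
  let T := (if rec then 1 else 0) +
    (univ.filter fun j : Fin (l - 1) => ms j = true).card
  if l < 2 * T then true else if 2 * T < l then false else coin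

/-- The GalB variable-to-check messages after `t` iterations, starting from
the initial messages `init`, with received word `rec` and tie-breaking rule
`tie` (a fixed bit for each directed edge and iteration). -/
def galMsg {n m l r : ℕ} (σ : (Fin n × Fin l) ≃ (Fin m × Fin r))
    (rec : Fin n → Bool) (tie : (Fin n × Fin l) → ℕ → Bool)
    (init : Fin n × Fin l → Bool) : ℕ → (Fin n × Fin l) → Bool
  | 0 => init
  | t + 1 => fun s =>
    galVar l (rec s.1)
      (fun j => galChk σ (galMsg σ rec tie init t) (s.1, otherIdx s.2 j))
      (tie s t)

/-- The LGalB variable-to-check messages after `t` iterations (same variable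
rule and the same tie-breaking rule, linearized check rule). -/
def linMsg {n m l r : ℕ} (σ : (Fin n × Fin l) ≃ (Fin m × Fin r))
    (rec : Fin n → Bool) (tie : (Fin n × Fin l) → ℕ → Bool)
    (init : Fin n × Fin l → Bool) : ℕ → (Fin n × Fin l) → Bool
  | 0 => init
  | t + 1 => fun s =>
    galVar l (rec s.1)
      (fun j => linChk σ (linMsg σ rec tie init t) (s.1, otherIdx s.2 j))
      (tie s t)

theorem galVar_mono (l : ℕ) (rc coin : Bool) (ms ms' : Fin (l - 1) → Bool)
    (h : ∀ j, ms j = true → ms' j = true)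
    (ht : galVar l rc ms coin = true) : galVar l rc ms' coin = true := by
  have hc : (univ.filter fun j => ms j = true).card ≤
      (univ.filter fun j => ms' j = true).card := by
    apply Finset.card_le_card
    intro j hj
    simp only [Finset.mem_filter] at hj ⊢
    exact ⟨hj.1, h j hj.2⟩
  unfold galVar at ht ⊢
  simp only at ht ⊢
  split_ifs at ht ⊢ <;> simp_all <;> omega

/-- for any graph, any received word, any common initial set of
bad messages, and the same tie-breaking rule, the bad (`-1`) edges of GalB are
contained in those of LGalB at every iteration; in particular the fraction of
erroneous messages of GalB is bounded by that of LGalB. -/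
theorem stmt7 {n m : ℕ} (l r : ℕ) (hl : 2 ≤ l) (hr : 2 ≤ r)
    (σ : (Fin n × Fin l) ≃ (Fin m × Fin r))
    (rec : Fin n → Bool) (tie : (Fin n × Fin l) → ℕ → Bool)
    (init : Fin n × Fin l → Bool) :
    (∀ t : ℕ, ∀ s : Fin n × Fin l,
      galMsg σ rec tie init t s = false → linMsg σ rec tie init t s = false) ∧
    (∀ t : ℕ,
      (((univ.filter fun s : Fin n × Fin l =>
          galMsg σ rec tie init t s = false).card : ℝ) / ((n : ℝ) * l)) ≤
      (((univ.filter fun s : Fin n × Fin l =>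
          linMsg σ rec tie init t s = false).card : ℝ) / ((n : ℝ) * l))) := by

  have key : ∀ t : ℕ, ∀ s : Fin n × Fin l,
      linMsg σ rec tie init t s = true → galMsg σ rec tie init t s = true := by
    intro t
    induction t with
    | zero => intro s h; exact h
    | succ t ih =>
      intro s h
      show galVar l (rec s.1) _ _ = true
      refine galVar_mono l _ _ _ _ (fun j hj => ?_) h
      unfold linChk at hj
      unfold galChk
      simp only [decide_eq_true_eq] at hj ⊢
      have he : (univ.filter fun b : Fin (r - 1) =>
          galMsg σ rec tie init t (chkAdj σ (s.1, otherIdx s.2 j) b) = false) = ∅ := by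
        apply Finset.filter_eq_empty_iff.2
        intro b _ hb
        have := ih _ (hj b)
        simp [this] at hb
      simp [he]
  have key' : ∀ t : ℕ, ∀ s : Fin n × Fin l,
      galMsg σ rec tie init t s = false → linMsg σ rec tie init t s = false := by
    intro t s h
    by_contra hc
    have h1 : linMsg σ rec tie init t s = true := by
      cases hx : linMsg σ rec tie init t s <;> simp_all
    have := key t s h1
    simp_all
  refine ⟨key', fun t => ?_⟩
  have hcard : ((univ.filter fun s : Fin n × Fin l =>
      galMsg σ rec tie init t s = false).card : ℝ) ≤
      ((univ.filter fun s : Fin n × Fin l =>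
      linMsg σ rec tie init t s = false).card : ℝ) := by
    have : (univ.filter fun s : Fin n × Fin l => galMsg σ rec tie init t s = false) ⊆
        (univ.filter fun s : Fin n × Fin l => linMsg σ rec tie init t s = false) := by
      intro s hs
      simp only [Finset.mem_filter] at hs ⊢
      exact ⟨hs.1, key' t s hs.2⟩
    exact_mod_cast Finset.card_le_card this
  rcases eq_or_ne ((n : ℝ) * l) 0 with h0 | h0
  · simp [h0]
  · have hpos : 0 < (n : ℝ) * l := lt_of_le_of_ne (by positivity) (Ne.symm h0)
    gcongr
end
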